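/- Let λ ∈ (0,1)^d be distinct, and let α ∈ ℝ_{>0}^d satisfy Σ_{i=1}^d α_i < 1 and Σ_{i=1}^d α_i/λ_i < 1. Then there exist distinct λ̂ ∈ (0,1)^d and α̂ ∈ ℝ^d with all α̂_i < 0 such that for every positive integer n, BLT_n(α, λ)^{-1} = BLT_n(α̂, λ̂). -/

import Mathlib

open Finset
-- sign helpers
lemma prod_sign_aux {ι : Type*} (s : Finset ι) (f : ι → ℝ) (p : ι → Prop) [DecidablePred p]
    (h1 : ∀ k ∈ s, ¬ p k → 0 < f k) (h2 : ∀ k ∈ s, p k → f k < 0) :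
    0 < (-1 : ℝ) ^ (s.filter p).card * ∏ k ∈ s, f k := by
  classical
  rw [← Finset.prod_filter_mul_prod_filter_not s p]
  have hpos : 0 < ∏ k ∈ s.filter (fun k => ¬ p k), f k :=
    Finset.prod_pos fun k hk => h1 k (Finset.mem_filter.mp hk).1 (Finset.mem_filter.mp hk).2
  have hneg : ∏ k ∈ s.filter p, f k = (-1 : ℝ) ^ (s.filter p).card * ∏ k ∈ s.filter p, (- f k) := by
    rw [← Finset.prod_const, ← Finset.prod_mul_distrib]
    exact Finset.prod_congr rfl fun k _ => by ring
  have hneg2 : 0 < ∏ k ∈ s.filter p, (- f k) :=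
    Finset.prod_pos fun k hk => by
      have := h2 k (Finset.mem_filter.mp hk).1 (Finset.mem_filter.mp hk).2; linarith
  rw [hneg]
  have h4 : ((-1 : ℝ) ^ (s.filter p).card) * ((-1 : ℝ) ^ (s.filter p).card) = 1 := by
    rw [← pow_add]
    exact Even.neg_one_pow ⟨(s.filter p).card, rfl⟩
  calc (0:ℝ) < (∏ k ∈ s.filter p, (- f k)) * ∏ k ∈ s.filter (fun k => ¬ p k), f k :=
        mul_pos hneg2 hpos
    _ = (-1 : ℝ) ^ (s.filter p).card * ((-1 : ℝ) ^ (s.filter p).card *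
          (∏ k ∈ s.filter p, (- f k)) * ∏ k ∈ s.filter (fun k => ¬ p k), f k) := by
        rw [← mul_assoc, ← mul_assoc, h4, one_mul]
    _ = (-1 : ℝ) ^ (s.filter p).card * (((-1 : ℝ) ^ (s.filter p).card *
          ∏ k ∈ s.filter p, (- f k)) * ∏ k ∈ s.filter (fun k => ¬ p k), f k) := by ring

lemma mul_neg_of_signs {v w : ℝ} {a b : ℕ} (ha : 0 < (-1:ℝ)^a * v) (hb : 0 < (-1:ℝ)^b * w)
    (h : Odd (a + b)) : v * w < 0 := by
  have := mul_pos ha hb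
  have heq : (-1:ℝ)^a * v * ((-1:ℝ)^b * w) = (-1:ℝ)^(a+b) * (v * w) := by
    rw [pow_add]; ring
  rw [heq, Odd.neg_one_pow h] at this
  linarith

lemma div_neg_of_mul_neg {x y : ℝ} (h : x * y < 0) : x / y < 0 := by
  rcases mul_neg_iff.mp h with ⟨hx, hy⟩ | ⟨hx, hy⟩
  · exact div_neg_of_pos_of_neg hx hy
  · exact div_neg_of_neg_of_pos hx hy

lemma exists_root_of_sign {f : ℝ → ℝ} (hf : Continuous f) {a b : ℝ} (hab : a < b)
    (h : f a * f b < 0) : ∃ r, r ∈ Set.Ioo a b ∧ f r = 0 := by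
  rcases mul_neg_iff.mp h with ⟨hfa, hfb⟩ | ⟨hfa, hfb⟩
  · have := intermediate_value_Ioo' hab.le hf.continuousOn
    have h0 : (0:ℝ) ∈ Set.Ioo (f b) (f a) := ⟨hfb, hfa⟩
    obtain ⟨r, hr, hfr⟩ := this h0
    exact ⟨r, hr, hfr⟩
  · have := intermediate_value_Ioo hab.le hf.continuousOn
    obtain ⟨r, hr, hfr⟩ := this ⟨hfa, hfb⟩
    exact ⟨r, hr, hfr⟩


/-- The `n × n` lower-triangular Toeplitz matrix whose first column is
`a 0, a 1, a 2, …`. -/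
def ltToeplitz (n : ℕ) (a : ℕ → ℝ) : Matrix (Fin n) (Fin n) ℝ :=
  Matrix.of fun j k => if (k : ℕ) ≤ (j : ℕ) then a ((j : ℕ) - (k : ℕ)) else 0

/-- First column of the BLT matrix: `1, ∑ αᵢ, ∑ αᵢλᵢ, ∑ αᵢλᵢ², …` -/
def bltCoef (d : ℕ) (α lam : Fin d → ℝ) : ℕ → ℝ :=
  fun t => if t = 0 then 1 else ∑ i, α i * lam i ^ (t - 1)

/-- convolution identity from the partial fraction conditions -/
lemma blt_conv (d : ℕ) (α lam β mu : Fin d → ℝ)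
    (hne : ∀ i j, lam i ≠ mu j)
    (hC1 : ∀ i, ∑ j, β j / (lam i - mu j) = -1)
    (hC2 : ∀ j, ∑ i, α i / (lam i - mu j) = 1) :
    ∀ t : ℕ, (∑ s ∈ range (t + 1), bltCoef d α lam (t - s) * bltCoef d β mu s)
      = if t = 0 then 1 else 0 := by
  intro t
  match t with
  | 0 => simp [bltCoef]
  | (T+1) =>
    rw [Finset.sum_range_succ, Finset.sum_range_succ']
    have h0 : bltCoef d α lam (T + 1 - (T + 1)) * bltCoef d β mu (T+1) = bltCoef d β mu (T+1) := by
      simp [bltCoef]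
    have h1 : bltCoef d α lam (T + 1 - 0) * bltCoef d β mu 0 = bltCoef d α lam (T+1) := by
      simp [bltCoef]
    rw [h0, h1]
    have h2 : ∀ s ∈ range T, bltCoef d α lam (T + 1 - (s+1)) * bltCoef d β mu (s+1)
        = ∑ i, ∑ j, α i * β j * (mu j ^ s * lam i ^ (T - 1 - s)) := by
      intro s hs
      rw [Finset.mem_range] at hs
      have hTs : T + 1 - (s+1) = T - s := by omega
      have hTs0 : T - s ≠ 0 := by omega
      have hTs1 : T - s - 1 = T - 1 - s := by omega
      simp only [bltCoef, hTs, hTs0, if_neg, Nat.add_eq_zero, Nat.succ_ne_zero, and_false,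
        if_false, Nat.add_sub_cancel, hTs1]
      rw [Finset.sum_mul_sum]
      refine Finset.sum_congr rfl fun i _ => Finset.sum_congr rfl fun j _ => by ring
    rw [Finset.sum_congr rfl h2, Finset.sum_comm]
    -- now: ∑ i ∑ j ∑ s ... ; use geometric sum
    have hgeom : ∀ i j, ∑ s ∈ range T, α i * β j * (mu j ^ s * lam i ^ (T - 1 - s))
        = α i * lam i ^ T * (β j / (lam i - mu j)) - β j * mu j ^ T * (α i / (lam i - mu j)) := by
      intro i j
      have hne' : lam i - mu j ≠ 0 := sub_ne_zero.mpr (hne i j)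
      have hg := geom_sum₂_mul (mu j) (lam i) T
      have : ∑ s ∈ range T, mu j ^ s * lam i ^ (T - 1 - s)
          = (lam i ^ T - mu j ^ T) / (lam i - mu j) := by
        field_simp
        linarith [hg]
      rw [← Finset.mul_sum, this]
      field_simp
    have hsum : ∑ i, ∑ s ∈ range T, ∑ j, α i * β j * (mu j ^ s * lam i ^ (T - 1 - s))
        = ∑ i, ∑ j, (α i * lam i ^ T * (β j / (lam i - mu j))
            - β j * mu j ^ T * (α i / (lam i - mu j))) := by
      refine Finset.sum_congr rfl fun i _ => ?_
      rw [Finset.sum_comm]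
      exact Finset.sum_congr rfl fun j _ => hgeom i j
    rw [hsum]
    have key : ∑ i, ∑ j, (α i * lam i ^ T * (β j / (lam i - mu j))
            - β j * mu j ^ T * (α i / (lam i - mu j)))
        = (-∑ i, α i * lam i ^ T) - ∑ j, β j * mu j ^ T := by
      simp only [Finset.sum_sub_distrib]
      congr 1
      · rw [← Finset.sum_neg_distrib]
        refine Finset.sum_congr rfl fun i _ => ?_
        rw [← Finset.mul_sum, hC1 i]; ring
      · rw [Finset.sum_comm]
        refine Finset.sum_congr rfl fun j _ => ?_
        rw [← Finset.mul_sum, hC2 j]; ring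
    rw [key]
    have hb : bltCoef d β mu (T+1) = ∑ j, β j * mu j ^ T := by simp [bltCoef]
    have ha : bltCoef d α lam (T+1) = ∑ i, α i * lam i ^ T := by simp [bltCoef]
    rw [hb, ha]
    simp only [Nat.succ_ne_zero, if_false]
    ring

/-- a Toeplitz product is the identity when the column sequences are convolution inverses -/
lemma ltToeplitz_mul_eq_one (n : ℕ) (a b : ℕ → ℝ)
    (hconv : ∀ t : ℕ, (∑ s ∈ range (t + 1), a (t - s) * b s) = if t = 0 then 1 else 0) :
    ltToeplitz n a * ltToeplitz n b = 1 := by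
  ext j k
  simp only [Matrix.mul_apply, ltToeplitz, Matrix.of_apply, Matrix.one_apply]
  by_cases hjk : (k : ℕ) ≤ (j : ℕ)
  · have hsum : ∀ s : Fin n, (if (s : ℕ) ≤ (j : ℕ) then a ((j : ℕ) - s) else 0) *
        (if (k : ℕ) ≤ (s : ℕ) then b ((s : ℕ) - k) else 0)
        = if (s : ℕ) ∈ Finset.Icc (k : ℕ) (j : ℕ) then a ((j:ℕ) - s) * b ((s:ℕ) - k) else 0 := by
      intro s
      by_cases h1 : (s : ℕ) ≤ (j : ℕ) <;> by_cases h2 : (k : ℕ) ≤ (s : ℕ) <;>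
        simp [h1, h2, Finset.mem_Icc]
    rw [Finset.sum_congr rfl fun s _ => hsum s, Fin.sum_univ_eq_sum_range
      (fun v => if v ∈ Finset.Icc (k : ℕ) (j : ℕ) then a ((j:ℕ) - v) * b (v - (k:ℕ)) else 0) n]
    rw [Finset.sum_ite_mem, Finset.inter_eq_right.mpr ?_]
    swap
    · intro v hv
      rw [Finset.mem_Icc] at hv
      exact Finset.mem_range.mpr (lt_of_le_of_lt hv.2 j.isLt)
    rw [← Finset.Ico_add_one_right_eq_Icc, Finset.sum_Ico_eq_sum_range]
    have hcard : (j : ℕ) + 1 - (k : ℕ) = ((j : ℕ) - (k : ℕ)) + 1 := by omega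
    rw [hcard]
    have : ∀ u ∈ range (((j:ℕ) - (k:ℕ)) + 1), a ((j:ℕ) - ((k:ℕ) + u)) * b ((k:ℕ) + u - (k:ℕ))
        = a (((j:ℕ) - (k:ℕ)) - u) * b u := by
      intro u hu
      congr 1 <;> congr 1 <;> omega
    rw [Finset.sum_congr rfl this, hconv]
    have : (j : ℕ) - (k : ℕ) = 0 ↔ j = k := by
      rw [Fin.ext_iff]; omega
    simp [this]
  · have : ∀ s : Fin n, (if (s : ℕ) ≤ (j : ℕ) then a ((j : ℕ) - s) else 0) *
        (if (k : ℕ) ≤ (s : ℕ) then b ((s : ℕ) - k) else 0) = 0 := by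
      intro s
      by_cases h1 : (s : ℕ) ≤ (j : ℕ) <;> by_cases h2 : (k : ℕ) ≤ (s : ℕ) <;>
        first | omega | simp [h1, h2]
    rw [Finset.sum_congr rfl fun s _ => this s]
    have hne : ¬ j = k := by rw [Fin.ext_iff]; omega
    simp [hne]

theorem blt_aux (d : ℕ) (α lam : Fin d → ℝ)
    (hlam : ∀ i, lam i ∈ Set.Ioo (0 : ℝ) 1)
    (hmono : StrictMono lam)
    (halpha : ∀ i, 0 < α i)
    (hsum2 : ∑ i, α i / lam i < 1) :
    ∃ β mu : Fin d → ℝ,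
      Function.Injective mu ∧ (∀ j, mu j ∈ Set.Ioo (0 : ℝ) 1) ∧ (∀ j, β j < 0) ∧
      (∀ i j, lam i ≠ mu j) ∧ (∀ i, ∑ j, β j / (lam i - mu j) = -1) ∧
      (∀ j, ∑ i, α i / (lam i - mu j) = 1) := by
  classical
  set t : Fin d → ℝ := fun m => (lam m)⁻¹ with ht
  have hlampos : ∀ m, 0 < lam m := fun m => (hlam m).1
  have htpos : ∀ m, 0 < t m := fun m => inv_pos.mpr (hlampos m)
  have ht1 : ∀ m, 1 < t m := fun m => (one_lt_inv_iff₀).mpr ⟨(hlam m).1, (hlam m).2⟩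
  have htanti : StrictAnti t := fun a b h => inv_strictAnti₀ (hlampos a) (hmono h)
  set Pf : ℝ → ℝ := fun x => (∏ k, (1 - lam k * x))
      + x * ∑ i, α i * ∏ k ∈ univ.erase i, (1 - lam k * x) with hPf
  have hPcont : Continuous Pf := by fun_prop
  -- eval at t m
  have hPt : ∀ m, Pf (t m) = t m * (α m * ∏ k ∈ univ.erase m, (1 - lam k * t m)) := by
    intro m
    have hzero : (1 : ℝ) - lam m * t m = 0 := by
      have : lam m * t m = 1 := by
        rw [ht]; exact mul_inv_cancel₀ (ne_of_gt (hlampos m))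
      rw [this, sub_self]
    have h1 : (∏ k, (1 - lam k * t m)) = 0 :=
      Finset.prod_eq_zero (Finset.mem_univ m) hzero
    have h2 : ∀ i ∈ univ, i ≠ m → α i * ∏ k ∈ univ.erase i, (1 - lam k * t m) = 0 := by
      intro i _ hi
      have : (∏ k ∈ univ.erase i, (1 - lam k * t m)) = 0 :=
        Finset.prod_eq_zero (Finset.mem_erase.mpr ⟨Ne.symm hi, Finset.mem_univ m⟩) hzero
      rw [this, mul_zero]
    rw [hPf]
    simp only [h1, zero_add]
    rw [Finset.sum_eq_single m h2 (fun h => absurd (Finset.mem_univ m) h)]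
  -- factor sign: 1 - lam k * x < 0 iff x > t k (for x > 0)
  have hlamt : ∀ k, lam k * t k = 1 := fun k => mul_inv_cancel₀ (ne_of_gt (hlampos k))
  have hfac_neg : ∀ k x, t k < x → 1 - lam k * x < 0 := by
    intro k x hx
    have h := mul_lt_mul_of_pos_left hx (hlampos k)
    rw [hlamt k] at h
    linarith
  have hfac_pos : ∀ k x, x < t k → 0 < 1 - lam k * x := by
    intro k x hx
    have h := mul_lt_mul_of_pos_left hx (hlampos k)
    rw [hlamt k] at h
    linarith
  -- sign of Pf at t m
  have hsign_t : ∀ m : Fin d, 0 < (-1 : ℝ) ^ (d - 1 - (m : ℕ)) * Pf (t m) := by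
    intro m
    rw [hPt m]
    have hfilter : (univ.erase m).filter (fun k => m < k) = Finset.Ioi m := by
      ext k
      simp only [Finset.mem_filter, Finset.mem_erase, Finset.mem_univ, Finset.mem_Ioi, true_and,
        and_true]
      constructor
      · rintro ⟨_, h⟩; exact h
      · intro h; exact ⟨ne_of_gt h, h⟩
    have hs := prod_sign_aux (univ.erase m) (fun k => 1 - lam k * t m) (fun k => m < k)
      (fun k hk hk2 => by
        have hkm : k < m := lt_of_le_of_ne (not_lt.mp hk2)
          (Finset.mem_erase.mp hk).1
        exact hfac_pos k (t m) (htanti hkm))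
      (fun k _ hk => hfac_neg k (t m) (htanti hk))
    rw [hfilter, Fin.card_Ioi] at hs
    have := mul_pos (mul_pos (htpos m) (halpha m)) hs
    calc (0:ℝ) < t m * α m * ((-1 : ℝ) ^ (d - 1 - (m : ℕ)) *
          ∏ k ∈ univ.erase m, (1 - lam k * t m)) := this
      _ = (-1 : ℝ) ^ (d - 1 - (m : ℕ)) *
          (t m * (α m * ∏ k ∈ univ.erase m, (1 - lam k * t m))) := by ring
  -- the point X0 beyond all poles
  have hbig : ∀ᶠ x in Filter.atTop, (∀ m, t m < x) ∧ (0 < x) ∧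
      (∑ i, α i * (x / (lam i * x - 1))) < 1 := by
    have h1 : ∀ᶠ x : ℝ in Filter.atTop, ∀ m, t m < x := by
      rw [Filter.eventually_all]
      exact fun m => Filter.eventually_gt_atTop (t m)
    have h2 : ∀ᶠ x : ℝ in Filter.atTop, (0:ℝ) < x := Filter.eventually_gt_atTop 0
    have h3 : Filter.Tendsto (fun x : ℝ => ∑ i, α i * (x / (lam i * x - 1)))
        Filter.atTop (nhds (∑ i, α i / lam i)) := by
      apply tendsto_finset_sum
      intro i _
      have hbase : Filter.Tendsto (fun x : ℝ => (lam i - x⁻¹)⁻¹) Filter.atTop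
          (nhds (lam i)⁻¹) := by
        have : Filter.Tendsto (fun x : ℝ => lam i - x⁻¹) Filter.atTop (nhds (lam i)) := by
          have := (tendsto_const_nhds (x := lam i) (f := Filter.atTop)).sub
            tendsto_inv_atTop_zero
          simpa using this
        exact this.inv₀ (ne_of_gt (hlampos i))
      have heq : ∀ᶠ x : ℝ in Filter.atTop, (lam i - x⁻¹)⁻¹ = x / (lam i * x - 1) := by
        filter_upwards [Filter.eventually_gt_atTop (t i), Filter.eventually_gt_atTop 0]
          with x hx hx0
        have h5 : lam i * x - 1 > 0 := by have := hfac_neg i x hx; linarith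
        field_simp
      have := hbase.congr' heq
      have h6 : α i / lam i = α i * (lam i)⁻¹ := by rw [div_eq_mul_inv]
      rw [h6]
      exact (this.const_mul (α i))
    have h4 := h3.eventually_lt_const (by linarith : ∑ i, α i / lam i < 1)
    filter_upwards [h1, h2, h4] with x hx1 hx2 hx3
    exact ⟨hx1, hx2, hx3⟩
  obtain ⟨X0, hX0t, hX0pos, hX0sum⟩ := hbig.exists
  -- sign of Pf at X0
  have hprod_erase : ∀ (i : Fin d) (x : ℝ), (∀ k, 1 - lam k * x ≠ 0) →
      (∏ k ∈ univ.erase i, (1 - lam k * x)) = (∏ k, (1 - lam k * x)) / (1 - lam i * x) := by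
    intro i x hne
    rw [eq_div_iff (hne i), Finset.prod_erase_mul _ _ (Finset.mem_univ i)]
  have hX0ne : ∀ k, 1 - lam k * X0 ≠ 0 := fun k => ne_of_lt (hfac_neg k X0 (hX0t k))
  have hsign_X0 : 0 < (-1 : ℝ) ^ d * Pf X0 := by
    have hPX0 : Pf X0 = (∏ k, (1 - lam k * X0)) *
        (1 - ∑ i, α i * (X0 / (lam i * X0 - 1))) := by
      rw [hPf]
      simp only
      rw [Finset.sum_congr rfl (fun i _ => by rw [hprod_erase i X0 hX0ne])]
      rw [mul_sub, mul_one]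
      congr 1
      rw [Finset.mul_sum, Finset.mul_sum, ← Finset.sum_neg_distrib]
      refine Finset.sum_congr rfl fun i _ => ?_
      have h5 : lam i * X0 - 1 ≠ 0 := by
        have := hfac_neg i X0 (hX0t i); intro h; rw [sub_eq_zero] at h; rw [h] at this; linarith
      field_simp
      rw [show (1 - X0 * lam i) = -(X0 * lam i - 1) by ring, div_neg]
    rw [hPX0]
    have hs := prod_sign_aux (univ : Finset (Fin d)) (fun k => 1 - lam k * X0)
      (fun _ => True) (fun k _ hk => absurd trivial hk)
      (fun k _ _ => hfac_neg k X0 (hX0t k))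
    rw [Finset.filter_true_of_mem (fun _ _ => trivial), Finset.card_univ, Fintype.card_fin] at hs
    have hbr : 0 < 1 - ∑ i, α i * (X0 / (lam i * X0 - 1)) := by linarith
    calc (0:ℝ) < ((-1:ℝ)^d * ∏ k, (1 - lam k * X0)) *
          (1 - ∑ i, α i * (X0 / (lam i * X0 - 1))) := mul_pos hs hbr
      _ = (-1:ℝ)^d * ((∏ k, (1 - lam k * X0)) *
          (1 - ∑ i, α i * (X0 / (lam i * X0 - 1)))) := by ring
  -- choose roots by IVT
  set U : Fin d → ℝ := fun m => if (m:ℕ) = 0 then X0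
      else t ⟨(m:ℕ)-1, Nat.lt_of_le_of_lt (Nat.sub_le _ _) m.isLt⟩ with hU
  have htU : ∀ m, t m < U m := by
    intro m
    rw [hU]
    by_cases h : (m:ℕ) = 0
    · simp only [h, if_pos]; exact hX0t m
    · simp only [h, if_false]
      exact htanti (by rw [Fin.lt_def]; simp; omega)
  have hPU : ∀ m, Pf (t m) * Pf (U m) < 0 := by
    intro m
    have hd : 0 < d := m.pos
    by_cases h : (m:ℕ) = 0
    · have hU0 : U m = X0 := by rw [hU]; simp [h]
      rw [hU0]
      exact mul_neg_of_signs (hsign_t m) hsign_X0 ⟨d - 1, by omega⟩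
    · have hU0 : U m = t ⟨(m:ℕ)-1, Nat.lt_of_le_of_lt (Nat.sub_le _ _) m.isLt⟩ := by
        rw [hU]; simp [h]
      rw [hU0]
      refine mul_neg_of_signs (hsign_t m) (hsign_t _) ?_
      simp only []
      refine ⟨d - 1 - (m:ℕ), ?_⟩
      have := m.isLt
      omega
  have hroot : ∀ m : Fin d, ∃ rr, rr ∈ Set.Ioo (t m) (U m) ∧ Pf rr = 0 :=
    fun m => exists_root_of_sign hPcont (htU m) (hPU m)
  choose r hrIoo hrzero using hroot
  have hrt : ∀ m, t m < r m := fun m => (hrIoo m).1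
  have hrU : ∀ m, r m < U m := fun m => (hrIoo m).2
  have hrt_lt : ∀ m k : Fin d, (k:ℕ) < (m:ℕ) → r m < t k := by
    intro m k hk
    have h0 : ¬ (m:ℕ) = 0 := by omega
    have hU0 : U m = t ⟨(m:ℕ)-1, Nat.lt_of_le_of_lt (Nat.sub_le _ _) m.isLt⟩ := by
      rw [hU]; simp [h0]
    have hle : t (⟨(m:ℕ)-1, Nat.lt_of_le_of_lt (Nat.sub_le _ _) m.isLt⟩ : Fin d) ≤ t k :=
      htanti.antitone (by rw [Fin.le_def]; simp; omega)
    calc r m < U m := hrU m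
      _ = _ := hU0
      _ ≤ t k := hle
  have hr1 : ∀ m, 1 < r m := fun m => (ht1 m).trans (hrt m)
  have hrpos : ∀ m, 0 < r m := fun m => lt_trans one_pos (hr1 m)
  have hrne_t : ∀ m k, r m ≠ t k := by
    intro m k
    rcases lt_or_ge (k:ℕ) (m:ℕ) with h | h
    · exact ne_of_lt (hrt_lt m k h)
    · have hle : t k ≤ t m := htanti.antitone (by rw [Fin.le_def]; omega)
      exact ne_of_gt (lt_of_le_of_lt hle (hrt m))
  have hranti : StrictAnti r := by
    intro a b hab
    exact lt_trans (hrt_lt b a hab) (hrt a)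
  have hrinj : Function.Injective r := hranti.injective
  -- define mu
  set mu : Fin d → ℝ := fun m => (r m)⁻¹ with hmu
  have hmupos : ∀ m, 0 < mu m := fun m => inv_pos.mpr (hrpos m)
  have hmur : ∀ m, mu m * r m = 1 := fun m => inv_mul_cancel₀ (ne_of_gt (hrpos m))
  have hmuIoo : ∀ m, mu m ∈ Set.Ioo (0:ℝ) 1 := by
    intro m
    refine ⟨hmupos m, ?_⟩
    rw [hmu]
    exact inv_lt_one_of_one_lt₀ (hr1 m)
  have hmumono : StrictMono mu := by
    intro a b hab
    rw [hmu]
    exact inv_strictAnti₀ (hrpos b) (hranti hab)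
  have hmuinj : Function.Injective mu := hmumono.injective
  have hlam_ne_mu : ∀ i j, lam i ≠ mu j := by
    intro i j h
    apply hrne_t j i
    have h2 : r j = (mu j)⁻¹ := by rw [hmu]; simp
    rw [h2, ← h, ht]
  have hlamr_ne : ∀ k m, 1 - lam k * r m ≠ 0 := by
    intro k m h
    apply hrne_t m k
    have h2 : lam k * r m = 1 := by linarith
    rw [ht]
    exact ((inv_eq_of_mul_eq_one_right h2)).symm
  have hmur_ne : ∀ k m, k ≠ m → 1 - mu k * r m ≠ 0 := by
    intro k m hkm h
    apply hkm
    apply hrinj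
    have h2 : mu k * r m = 1 := by linarith
    have h3 : r m = (mu k)⁻¹ := (inv_eq_of_mul_eq_one_right h2).symm
    rw [h3, hmu]; simp
  set D : Fin d → ℝ := fun m => ∏ k, (1 - lam k * r m) with hD
  have hDne : ∀ m, D m ≠ 0 := fun m => Finset.prod_ne_zero_iff.mpr fun k _ => hlamr_ne k m
  -- C2
  have hC2 : ∀ j, ∑ i, α i / (lam i - mu j) = 1 := by
    intro j
    have h0 := hrzero j
    rw [hPf] at h0
    simp only at h0
    have h1 : ∑ i, α i * ∏ k ∈ univ.erase i, (1 - lam k * r j)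
        = (∑ i, α i / (1 - lam i * r j)) * D j := by
      rw [Finset.sum_mul]
      refine Finset.sum_congr rfl fun i _ => ?_
      rw [hprod_erase i (r j) (fun k => hlamr_ne k j), hD]
      ring
    rw [h1] at h0
    have h2 : 1 + r j * ∑ i, α i / (1 - lam i * r j) = 0 := by
      have h3 : D j * (1 + r j * ∑ i, α i / (1 - lam i * r j)) = 0 := by
        rw [← h0, hD]; ring
      rcases mul_eq_zero.mp h3 with h | h
      · exact absurd h (hDne j)
      · exact h
    have h4 : ∀ i, α i / (lam i - mu j) = -(α i * (r j / (1 - lam i * r j))) := by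
      intro i
      have hc : (1:ℝ) - lam i * r j ≠ 0 := hlamr_ne i j
      have hr0 : r j ≠ 0 := ne_of_gt (hrpos j)
      rw [hmu]
      rw [div_eq_iff (sub_ne_zero.mpr (hlam_ne_mu i j))]
      simp only [hmu]
      have hc' : (1:ℝ) - r j * lam i ≠ 0 := by rw [mul_comm]; exact hc
      field_simp
      ring
    rw [Finset.sum_congr rfl fun i _ => h4 i]
    have h5 : r j * ∑ i, α i / (1 - lam i * r j) = ∑ i, α i * (r j / (1 - lam i * r j)) := by
      rw [Finset.mul_sum]
      exact Finset.sum_congr rfl fun i _ => by ring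
    rw [Finset.sum_neg_distrib, ← h5]
    linarith
  -- define beta
  set E : Fin d → ℝ := fun m => ∏ k ∈ univ.erase m, (1 - mu k * r m) with hE
  have hEne : ∀ m, E m ≠ 0 := fun m => Finset.prod_ne_zero_iff.mpr
    fun k hk => hmur_ne k m (Finset.mem_erase.mp hk).1
  set β : Fin d → ℝ := fun m => D m / (r m * E m) with hβ
  have hIoi_filter : ∀ m : Fin d, (univ.erase m).filter (fun k => m < k) = Finset.Ioi m := by
    intro m
    ext k
    simp only [Finset.mem_filter, Finset.mem_erase, Finset.mem_univ, Finset.mem_Ioi, true_and,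
      and_true]
    constructor
    · rintro ⟨_, h⟩; exact h
    · intro h; exact ⟨ne_of_gt h, h⟩
  have hIci_filter : ∀ m : Fin d, univ.filter (fun k => m ≤ k) = Finset.Ici m := by
    intro m
    ext k
    simp [Finset.mem_Ici]
  have hmufac_neg : ∀ m k, m < k → 1 - mu k * r m < 0 := by
    intro m k hk
    have h1 : r k < r m := hranti hk
    have h2 : mu k * r k = 1 := hmur k
    have h3 := mul_lt_mul_of_pos_left h1 (hmupos k)
    rw [h2] at h3
    linarith
  have hmufac_pos : ∀ m k, k < m → 0 < 1 - mu k * r m := by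
    intro m k hk
    have h1 : r m < r k := hranti hk
    have h3 := mul_lt_mul_of_pos_left h1 (hmupos k)
    rw [hmur k] at h3
    linarith
  have hsignD : ∀ m : Fin d, 0 < (-1:ℝ)^(d - (m:ℕ)) * D m := by
    intro m
    have hs := prod_sign_aux (univ : Finset (Fin d)) (fun k => 1 - lam k * r m)
      (fun k => m ≤ k)
      (fun k _ hk => hfac_pos k (r m) (hrt_lt m k (Fin.lt_def.mp (not_le.mp hk))))
      (fun k _ hk => hfac_neg k (r m) (lt_of_le_of_lt (htanti.antitone hk) (hrt m)))
    rwa [hIci_filter, Fin.card_Ici] at hs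
  have hsignE : ∀ m : Fin d, 0 < (-1:ℝ)^(d - 1 - (m:ℕ)) * E m := by
    intro m
    have hs := prod_sign_aux (univ.erase m) (fun k => 1 - mu k * r m)
      (fun k => m < k)
      (fun k hk hk2 => hmufac_pos m k (lt_of_le_of_ne (not_lt.mp hk2)
        (Finset.mem_erase.mp hk).1))
      (fun k _ hk => hmufac_neg m k hk)
    rwa [hIoi_filter, Fin.card_Ioi] at hs
  have hβneg : ∀ m, β m < 0 := by
    intro m
    rw [hβ]
    apply div_neg_of_mul_neg
    have hOdd : Odd ((d - (m:ℕ)) + (d - 1 - (m:ℕ))) :=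
      ⟨d - 1 - (m:ℕ), by have := m.isLt; omega⟩
    refine mul_neg_of_signs (hsignD m) ?_ hOdd
    calc (0:ℝ) < r m * ((-1:ℝ)^(d - 1 - (m:ℕ)) * E m) := mul_pos (hrpos m) (hsignE m)
      _ = (-1:ℝ)^(d - 1 - (m:ℕ)) * (r m * E m) := by ring
  -- polynomial identity N = Q
  have hevalp : ∀ (s' : Finset (Fin d)) (c : Fin d → ℝ) (x : ℝ),
      Polynomial.eval x (∏ k ∈ s', (1 - Polynomial.C (c k) * Polynomial.X))
        = ∏ k ∈ s', (1 - c k * x) := by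
    intro s' c x
    rw [Polynomial.eval_prod]
    exact Finset.prod_congr rfl fun k _ => by simp
  have hdeg_fac : ∀ c : ℝ, (1 - Polynomial.C c * Polynomial.X).degree ≤ 1 := by
    intro c
    refine le_trans (Polynomial.degree_sub_le _ _) ?_
    rw [max_le_iff]
    refine ⟨le_trans Polynomial.degree_one_le ?_, Polynomial.degree_C_mul_X_le c⟩
    exact zero_le_one
  have hdeg_prod : ∀ (s' : Finset (Fin d)) (c : Fin d → ℝ),
      (∏ k ∈ s', (1 - Polynomial.C (c k) * Polynomial.X)).degree ≤ (s'.card : WithBot ℕ) := by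
    intro s' c
    refine le_trans (Polynomial.degree_prod_le s' _) ?_
    refine le_trans (Finset.sum_le_card_nsmul s' _ (1 : WithBot ℕ)
      (fun k _ => hdeg_fac (c k))) ?_
    rw [nsmul_eq_mul, mul_one]
  set Qp : Polynomial ℝ := ∏ k, (1 - Polynomial.C (lam k) * Polynomial.X) with hQp
  set Mp : Polynomial ℝ := ∏ k, (1 - Polynomial.C (mu k) * Polynomial.X) with hMp
  set Sp : Polynomial ℝ := ∑ j, Polynomial.C (β j) *
      ∏ k ∈ univ.erase j, (1 - Polynomial.C (mu k) * Polynomial.X) with hSp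
  set Np : Polynomial ℝ := Mp + Polynomial.X * Sp with hNp
  have hdegQ : Qp.degree ≤ ((d : ℕ) : WithBot ℕ) := by
    have := hdeg_prod univ lam
    rwa [Finset.card_univ, Fintype.card_fin] at this
  have hdegN : Np.degree ≤ ((d : ℕ) : WithBot ℕ) := by
    have hM : Mp.degree ≤ ((d : ℕ) : WithBot ℕ) := by
      have := hdeg_prod univ mu
      rwa [Finset.card_univ, Fintype.card_fin] at this
    have hXS : (Polynomial.X * Sp).degree ≤ ((d : ℕ) : WithBot ℕ) := by
      by_cases hd : d = 0
      · subst hd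
        have hSp0 : Polynomial.X * Sp = 0 := by rw [hSp]; simp
        rw [hSp0]
        simp
      · have hS : Sp.degree ≤ ((d - 1 : ℕ) : WithBot ℕ) := by
          rw [hSp]
          refine le_trans (Polynomial.degree_sum_le _ _) ?_
          refine Finset.sup_le fun j _ => ?_
          refine le_trans (Polynomial.degree_mul_le _ _) ?_
          have h1 := hdeg_prod (univ.erase j) mu
          rw [Finset.card_erase_of_mem (Finset.mem_univ j), Finset.card_univ,
            Fintype.card_fin] at h1
          calc (Polynomial.C (β j)).degree
                + (∏ k ∈ univ.erase j, (1 - Polynomial.C (mu k) * Polynomial.X)).degree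
              ≤ 0 + ((d - 1 : ℕ) : WithBot ℕ) := add_le_add Polynomial.degree_C_le h1
            _ = ((d - 1 : ℕ) : WithBot ℕ) := by rw [zero_add]
        refine le_trans (Polynomial.degree_mul_le _ _) ?_
        rw [Polynomial.degree_X]
        calc (1 : WithBot ℕ) + Sp.degree ≤ 1 + ((d - 1 : ℕ) : WithBot ℕ) :=
              add_le_add le_rfl hS
          _ = ((d : ℕ) : WithBot ℕ) := by
              rw [← Nat.cast_one, ← Nat.cast_add]
              congr 1
              omega
    refine le_trans (Polynomial.degree_add_le _ _) ?_
    rw [max_le_iff]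
    exact ⟨hM, hXS⟩
  set sfin : Finset ℝ := insert (0:ℝ) (univ.image r) with hsfin
  have hcard : sfin.card = d + 1 := by
    rw [hsfin, Finset.card_insert_of_notMem, Finset.card_image_of_injective _ hrinj,
      Finset.card_univ, Fintype.card_fin]
    intro h
    obtain ⟨m, _, hm⟩ := Finset.mem_image.mp h
    exact (ne_of_gt (hrpos m)) hm
  have hNQ : Np = Qp := by
    refine Polynomial.eq_of_degrees_lt_of_eval_finset_eq sfin ?_ ?_ ?_
    · rw [hcard]
      refine lt_of_le_of_lt hdegN ?_
      exact_mod_cast Nat.lt_succ_self d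
    · rw [hcard]
      refine lt_of_le_of_lt hdegQ ?_
      exact_mod_cast Nat.lt_succ_self d
    · intro x hx
      rw [hsfin, Finset.mem_insert] at hx
      rcases hx with hx | hx
      · subst hx
        rw [hNp, hQp, hMp]
        simp only [Polynomial.eval_add, Polynomial.eval_mul, Polynomial.eval_X, zero_mul,
          add_zero, hevalp]
        simp
      · obtain ⟨m, _, hm⟩ := Finset.mem_image.mp hx
        subst hm
        rw [hNp, hQp, hMp, hSp]
        simp only [Polynomial.eval_add, Polynomial.eval_mul, Polynomial.eval_X,
          Polynomial.eval_finset_sum, Polynomial.eval_C, hevalp]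
        have hM0 : (∏ k, (1 - mu k * r m)) = 0 :=
          Finset.prod_eq_zero (Finset.mem_univ m) (by rw [hmur m]; ring)
        have hsum : ∑ j, β j * ∏ k ∈ univ.erase j, (1 - mu k * r m) = β m * E m := by
          rw [Finset.sum_eq_single m (fun j _ hj => by
              rw [Finset.prod_eq_zero (Finset.mem_erase.mpr ⟨Ne.symm hj, Finset.mem_univ m⟩)
                (by rw [hmur m]; ring), mul_zero])
            (fun h => absurd (Finset.mem_univ m) h)]
        rw [hM0, hsum, zero_add, hβ]
        have hr0 : r m ≠ 0 := ne_of_gt (hrpos m)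
        have hE0 : E m ≠ 0 := hEne m
        rw [hD]
        field_simp
  -- C1
  have hmut_ne : ∀ k i, 1 - mu k * t i ≠ 0 := by
    intro k i h
    apply hrne_t k i
    have h2 : mu k * t i = 1 := by linarith
    have h3 : t i = (mu k)⁻¹ := (inv_eq_of_mul_eq_one_right h2).symm
    rw [h3, hmu]; simp
  have hC1 : ∀ i, ∑ j, β j / (lam i - mu j) = -1 := by
    intro i
    have hq0 : Polynomial.eval (t i) Qp = 0 := by
      rw [hQp, hevalp]
      exact Finset.prod_eq_zero (Finset.mem_univ i) (by rw [hlamt i]; ring)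
    have hn0 : Polynomial.eval (t i) Np = 0 := by rw [hNQ]; exact hq0
    rw [hNp, hMp, hSp] at hn0
    simp only [Polynomial.eval_add, Polynomial.eval_mul, Polynomial.eval_X,
      Polynomial.eval_finset_sum, Polynomial.eval_C, hevalp] at hn0
    set Mt : ℝ := ∏ k, (1 - mu k * t i) with hMt
    have hMt0 : Mt ≠ 0 := Finset.prod_ne_zero_iff.mpr fun k _ => hmut_ne k i
    have hprod_erase_mu : ∀ j, (∏ k ∈ univ.erase j, (1 - mu k * t i))
        = Mt / (1 - mu j * t i) := by
      intro j
      rw [eq_div_iff (hmut_ne j i), hMt, Finset.prod_erase_mul _ _ (Finset.mem_univ j)]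
    have h1 : ∑ j, β j * ∏ k ∈ univ.erase j, (1 - mu k * t i)
        = (∑ j, β j / (1 - mu j * t i)) * Mt := by
      rw [Finset.sum_mul]
      refine Finset.sum_congr rfl fun j _ => ?_
      rw [hprod_erase_mu j]
      ring
    rw [h1] at hn0
    have h2 : 1 + t i * ∑ j, β j / (1 - mu j * t i) = 0 := by
      have h3 : Mt * (1 + t i * ∑ j, β j / (1 - mu j * t i)) = 0 := by
        rw [← hn0]; ring
      rcases mul_eq_zero.mp h3 with h | h
      · exact absurd h hMt0
      · exact h
    have h4 : ∀ j, β j / (lam i - mu j) = β j * (t i / (1 - mu j * t i)) := by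
      intro j
      have hc : (1:ℝ) - mu j * t i ≠ 0 := hmut_ne j i
      have hkey : lam i * (1 - mu j * t i) = lam i - mu j := by
        linear_combination (-(mu j)) * hlamt i
      rw [show t i / (1 - mu j * t i) = 1 / (lam i - mu j) from by
        rw [div_eq_div_iff hc (sub_ne_zero.mpr (hlam_ne_mu i j))]
        linear_combination hlamt i, mul_one_div]
    rw [Finset.sum_congr rfl fun j _ => h4 j]
    have h5 : ∑ j, β j * (t i / (1 - mu j * t i)) = t i * ∑ j, β j / (1 - mu j * t i) := by
      rw [Finset.mul_sum]
      exact Finset.sum_congr rfl fun j _ => by ring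
    rw [h5]
    linarith
  exact ⟨β, mu, hmuinj, hmuIoo, hβneg, hlam_ne_mu, hC1, hC2⟩

/-- BLT inversion theorem: for distinct `λ ∈ (0,1)^d`, `α > 0` with
`∑ αᵢ < 1` and `∑ αᵢ/λᵢ < 1`, there are distinct `λ̂ ∈ (0,1)^d` and `α̂ < 0`
with `BLT_n(α,λ)⁻¹ = BLT_n(α̂,λ̂)` for all `n`. -/
theorem blt_inversion (d : ℕ) (α lam : Fin d → ℝ)
    (hlam : ∀ i, lam i ∈ Set.Ioo (0 : ℝ) 1)
    (hdist : Function.Injective lam)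
    (halpha : ∀ i, 0 < α i)
    (hsum1 : ∑ i, α i < 1)
    (hsum2 : ∑ i, α i / lam i < 1) :
    ∃ (αh lamh : Fin d → ℝ),
      Function.Injective lamh ∧
      (∀ i, lamh i ∈ Set.Ioo (0 : ℝ) 1) ∧
      (∀ i, αh i < 0) ∧
      ∀ n : ℕ, 0 < n →
        (ltToeplitz n (bltCoef d α lam))⁻¹ = ltToeplitz n (bltCoef d αh lamh) := by
  classical
  set σ := Tuple.sort lam with hσ
  set L : Fin d → ℝ := lam ∘ σ with hL
  set A : Fin d → ℝ := α ∘ σ with hA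
  have hLinj : Function.Injective L := hdist.comp σ.injective
  have hLmono : StrictMono L := (Tuple.monotone_sort lam).strictMono_of_injective hLinj
  have hLIoo : ∀ i, L i ∈ Set.Ioo (0 : ℝ) 1 := fun i => hlam _
  have hApos : ∀ i, 0 < A i := fun i => halpha _
  have hAsum : ∑ i, A i / L i < 1 := by
    rw [show ∑ i, A i / L i = ∑ i, α i / lam i from Equiv.sum_comp σ (fun i => α i / lam i)]
    exact hsum2
  obtain ⟨β, mu, hmuinj, hmuIoo, hβ, hne, hC1, hC2⟩ := blt_aux d A L hLIoo hLmono hApos hAsum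
  have hne' : ∀ i j, lam i ≠ mu j := by
    intro i j
    have := hne (σ.symm i) j
    simpa [hL, Function.comp] using this
  have hC1' : ∀ i, ∑ j, β j / (lam i - mu j) = -1 := by
    intro i
    have := hC1 (σ.symm i)
    simpa [hL, Function.comp] using this
  have hC2' : ∀ j, ∑ i, α i / (lam i - mu j) = 1 := by
    intro j
    have := hC2 j
    rwa [show ∑ i, A i / (L i - mu j) = ∑ i, α i / (lam i - mu j) from
      Equiv.sum_comp σ (fun i => α i / (lam i - mu j))] at this
  refine ⟨β, mu, hmuinj, hmuIoo, hβ, fun n _ => ?_⟩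
  exact Matrix.inv_eq_right_inv (ltToeplitz_mul_eq_one n _ _
    (blt_conv d α lam β mu hne' hC1' hC2'))
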